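/- The full subcategory of fibrant objects in any model category is admissibly left exact and right proper: the pullback of a morphism between fibrant objects along a fibration between fibrant objects exists in the subcategory, and the pullback of a weak equivalence between fibrant objects along a fibration between fibrant objects is a weak equivalence. -/

import Mathlib

universe w v u

open CategoryTheory CategoryTheory.Limits Opposite

namespace Paper

variable {C : Type u} [Category.{v} C]

/-- `g` is a retract of `f` in the arrow category. -/
def IsRetractOfArrow {X Y A B : C} (g : X ⟶ Y) (f : A ⟶ B) : Prop :=
  ∃ (i : X ⟶ A) (r : A ⟶ X) (i' : Y ⟶ B) (r' : B ⟶ Y),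
    i ≫ r = 𝟙 X ∧ i' ≫ r' = 𝟙 Y ∧ i ≫ f = g ≫ i' ∧ r ≫ g = f ≫ r'

/-- `f` is a pushout of some morphism belonging to `I`. -/
def IsPushoutOfElem (I : MorphismProperty C) {X Y : C} (f : X ⟶ Y) : Prop :=
  ∃ (A B : C) (g : A ⟶ B) (h : A ⟶ X) (k : B ⟶ Y), I g ∧ IsPushout g h k f

/-- The inclusion of the interval `[⊥, j)` into a preorder. -/
def ltInclusion {J : Type w} [Preorder J] (j : J) : Set.Iio j ⥤ J :=
  (show Monotone (fun k : Set.Iio j => (k : J)) from fun _ _ h => h).functor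

/-- The canonical cocone on the restriction of `F` to `[⊥, j)`, with vertex `F.obj j`. -/
@[simps]
def coconeLT {J : Type w} [Preorder J] (F : J ⥤ C) (j : J) :
    Limits.Cocone (ltInclusion j ⋙ F) where
  pt := F.obj j
  ι :=
    { app := fun k => F.map (homOfLE (le_of_lt k.2))
      naturality := fun k l h => by
        exact (F.map_comp _ _).symm.trans
          ((congrArg F.map (Subsingleton.elim _ _)).trans (Category.comp_id _).symm) }

/-- A witness that `f` is a transfinite composition of pushouts of morphisms of `I`:
a colimit-preserving well-ordered chain starting at the source of `f`, each successor
step of which is a pushout of a morphism of `I`, whose composition is `f`. -/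
structure TransfiniteCompositionWitness (I : MorphismProperty C) {X Y : C} (f : X ⟶ Y) where
  J : Type v
  [linOrd : LinearOrder J]
  [orderBot : OrderBot J]
  [succOrder : SuccOrder J]
  [wellFounded : WellFoundedLT J]
  F : J ⥤ C
  c : Limits.Cocone F
  isColimit : Limits.IsColimit c
  isoBot : X ≅ F.obj ⊥
  isoPt : c.pt ≅ Y
  fac : f = isoBot.hom ≫ c.ι.app ⊥ ≫ isoPt.hom
  succ : ∀ j : J, ¬ IsMax j → IsPushoutOfElem I (F.map (homOfLE (Order.le_succ j)))
  limit : ∀ j : J, Order.IsSuccLimit j → Nonempty (Limits.IsColimit (coconeLT F j))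

/-- `cell I`: the class of transfinite compositions of pushouts of morphisms of `I`. -/
def transfiniteCell (I : MorphismProperty C) : MorphismProperty C :=
  fun _ _ f => Nonempty (TransfiniteCompositionWitness I f)

/-- `inj I`: the class of morphisms with the right lifting property with respect to `I`. -/
def injClass (I : MorphismProperty C) : MorphismProperty C :=
  fun _ _ q => ∀ ⦃A B : C⦄ (g : A ⟶ B), I g → HasLiftingProperty g q

/-- `cof I`: the class of morphisms with the left lifting property with respect to `inj I`. -/
def cofClass (I : MorphismProperty C) : MorphismProperty C :=
  fun _ _ f => ∀ ⦃X Y : C⦄ (q : X ⟶ Y), injClass I q → HasLiftingProperty f q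

/-- A model structure on a category: weak equivalences, cofibrations and fibrations,
subject to the two-out-of-three, retract, lifting and factorization axioms. -/
structure ModelStructure (C : Type u) [Category.{v} C] : Type (max u v) where
  W : MorphismProperty C
  Cof : MorphismProperty C
  Fib : MorphismProperty C
  w_of_iso : ∀ {X Y : C} (f : X ⟶ Y), IsIso f → W f
  cof_of_iso : ∀ {X Y : C} (f : X ⟶ Y), IsIso f → Cof f
  fib_of_iso : ∀ {X Y : C} (f : X ⟶ Y), IsIso f → Fib f
  w_comp : ∀ {X Y Z : C} (f : X ⟶ Y) (g : Y ⟶ Z), W f → W g → W (f ≫ g)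
  w_cancel_left : ∀ {X Y Z : C} (f : X ⟶ Y) (g : Y ⟶ Z), W f → W (f ≫ g) → W g
  w_cancel_right : ∀ {X Y Z : C} (f : X ⟶ Y) (g : Y ⟶ Z), W g → W (f ≫ g) → W f
  cof_comp : ∀ {X Y Z : C} (f : X ⟶ Y) (g : Y ⟶ Z), Cof f → Cof g → Cof (f ≫ g)
  fib_comp : ∀ {X Y Z : C} (f : X ⟶ Y) (g : Y ⟶ Z), Fib f → Fib g → Fib (f ≫ g)
  w_retract : ∀ {X Y A B : C} (g : X ⟶ Y) (f : A ⟶ B),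
    IsRetractOfArrow g f → W f → W g
  cof_retract : ∀ {X Y A B : C} (g : X ⟶ Y) (f : A ⟶ B),
    IsRetractOfArrow g f → Cof f → Cof g
  fib_retract : ∀ {X Y A B : C} (g : X ⟶ Y) (f : A ⟶ B),
    IsRetractOfArrow g f → Fib f → Fib g
  lift_trivCof_fib : ∀ {A B X Y : C} (i : A ⟶ B) (p : X ⟶ Y),
    Cof i → W i → Fib p → HasLiftingProperty i p
  lift_cof_trivFib : ∀ {A B X Y : C} (i : A ⟶ B) (p : X ⟶ Y),
    Cof i → Fib p → W p → HasLiftingProperty i p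
  fact_cof_trivFib : ∀ {X Y : C} (f : X ⟶ Y),
    ∃ (Z : C) (i : X ⟶ Z) (p : Z ⟶ Y), Cof i ∧ Fib p ∧ W p ∧ i ≫ p = f
  fact_trivCof_fib : ∀ {X Y : C} (f : X ⟶ Y),
    ∃ (Z : C) (i : X ⟶ Z) (p : Z ⟶ Y), Cof i ∧ W i ∧ Fib p ∧ i ≫ p = f

variable {D : Type u} [Category.{v} D]

/-- An object is fibrant if the morphism to the terminal object is a fibration. -/
def ModelStructure.Fibrant [Limits.HasTerminal C] (M : ModelStructure C) (X : C) : Prop :=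
  M.Fib (Limits.terminal.from X)

/-- An object is cofibrant if the morphism from the initial object is a cofibration. -/
def ModelStructure.Cofibrant [Limits.HasInitial C] (M : ModelStructure C) (X : C) : Prop :=
  M.Cof (Limits.initial.to X)

variable (M : ModelStructure C)

/-- A full subcategory (given by a set of objects) is admissibly left exact if it contains
a pullback of any of its morphisms along any of its fibrations. -/
def AdmissiblyLeftExact (E : Set C) : Prop :=
  ∀ {X X' Y : C} (f : X' ⟶ X) (p : Y ⟶ X), X ∈ E → X' ∈ E → Y ∈ E → M.Fib p →
    ∃ (P : C) (fst : P ⟶ X') (snd : P ⟶ Y), P ∈ E ∧ IsPullback fst snd f p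

/-- A full subcategory is partially left exact if it contains a pullback of any of its
weak equivalences along any of its fibrations. -/
def PartiallyLeftExact (E : Set C) : Prop :=
  ∀ {X X' Y : C} (f : X' ⟶ X) (p : Y ⟶ X), X ∈ E → X' ∈ E → Y ∈ E → M.W f → M.Fib p →
    ∃ (P : C) (fst : P ⟶ X') (snd : P ⟶ Y), P ∈ E ∧ IsPullback fst snd f p

/-- A full subcategory is right proper if, within it, pullbacks of weak equivalences along
fibrations are weak equivalences. -/
def RightProperOn (E : Set C) : Prop :=
  ∀ {X X' Y P : C} (w : X' ⟶ X) (p : Y ⟶ X) (fst : P ⟶ X') (snd : P ⟶ Y),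
    X ∈ E → X' ∈ E → Y ∈ E → P ∈ E → M.W w → M.Fib p →
    IsPullback fst snd w p → M.W snd

/-- A full subcategory is stable under trivial fibrations if the source of any trivial
fibration with target in it belongs to it. -/
def StableUnderTrivFib (E : Set C) : Prop :=
  ∀ {X Y : C} (p : Y ⟶ X), X ∈ E → M.Fib p → M.W p → Y ∈ E


section Reedy

/-- Lifting properties pass to pullbacks. -/
lemma hlp_of_isPullback {P X Y Z A B : C} {fst : P ⟶ X} {snd : P ⟶ Y} {f : X ⟶ Z} {p : Y ⟶ Z}
    (h : IsPullback fst snd f p) {i : A ⟶ B} (hip : HasLiftingProperty i p) :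
    HasLiftingProperty i fst := by
  constructor
  intro u w sq
  have sq2 : CommSq (u ≫ snd) i p (w ≫ f) :=
    ⟨by rw [Category.assoc, ← h.w, ← Category.assoc, ← Category.assoc, sq.w]⟩
  obtain ⟨⟨l⟩⟩ := hip.sq_hasLift sq2
  refine ⟨⟨⟨h.lift w l.l (by rw [l.fac_right]), ?_, h.lift_fst _ _ _⟩⟩⟩
  apply h.hom_ext
  · rw [Category.assoc, h.lift_fst, sq.w]
  · rw [Category.assoc, h.lift_snd, l.fac_left]

/-- A map with the right lifting property against trivial cofibrations is a fibration. -/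
lemma fib_of_rlp {X Y : C} (p : X ⟶ Y)
    (h : ∀ {A B : C} (i : A ⟶ B), M.Cof i → M.W i → HasLiftingProperty i p) : M.Fib p := by
  obtain ⟨Z, j, q, hCof, hW, hFib, hfac⟩ := M.fact_trivCof_fib p
  have sq : CommSq (𝟙 X) j p q := ⟨by rw [Category.id_comp, hfac]⟩
  obtain ⟨⟨l⟩⟩ := (h j hCof hW).sq_hasLift sq
  refine M.fib_retract p q ⟨j, l.l, 𝟙 Y, 𝟙 Y, l.fac_left, Category.id_comp _, ?_, ?_⟩ hFib
  · rw [hfac, Category.comp_id]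
  · rw [l.fac_right, Category.comp_id]

/-- A map with the right lifting property against cofibrations is a trivial fibration. -/
lemma trivFib_of_rlp {X Y : C} (p : X ⟶ Y)
    (h : ∀ {A B : C} (i : A ⟶ B), M.Cof i → HasLiftingProperty i p) : M.Fib p ∧ M.W p := by
  obtain ⟨Z, j, q, hCof, hFib, hW, hfac⟩ := M.fact_cof_trivFib p
  have sq : CommSq (𝟙 X) j p q := ⟨by rw [Category.id_comp, hfac]⟩
  obtain ⟨⟨l⟩⟩ := (h j hCof).sq_hasLift sq
  have hret : IsRetractOfArrow p q :=
    ⟨j, l.l, 𝟙 Y, 𝟙 Y, l.fac_left, Category.id_comp _,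
      by rw [hfac, Category.comp_id], by rw [l.fac_right, Category.comp_id]⟩
  exact ⟨M.fib_retract p q hret hFib, M.w_retract p q hret hW⟩

/-- Fibrations are stable under pullback. -/
lemma fib_pullback {P X Y Z : C} {fst : P ⟶ X} {snd : P ⟶ Y} {f : X ⟶ Z} {p : Y ⟶ Z}
    (h : IsPullback fst snd f p) (hp : M.Fib p) : M.Fib fst :=
  fib_of_rlp M fst fun i hc hw => hlp_of_isPullback h (M.lift_trivCof_fib i p hc hw hp)

/-- Trivial fibrations are stable under pullback. -/
lemma trivFib_pullback {P X Y Z : C} {fst : P ⟶ X} {snd : P ⟶ Y} {f : X ⟶ Z} {p : Y ⟶ Z}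
    (h : IsPullback fst snd f p) (hp : M.Fib p) (hwp : M.W p) : M.Fib fst ∧ M.W fst :=
  trivFib_of_rlp M fst fun i hc => hlp_of_isPullback h (M.lift_cof_trivFib i p hc hp hwp)

/-- **Key lemma** (Reedy/Brown): the pullback, along a fibration, of a section of a
trivial fibration is a weak equivalence. -/
lemma w_pullback_section [HasLimits C] {A N E P : C} (j : A ⟶ N) (t : N ⟶ A)
    (hjt : j ≫ t = 𝟙 A) (hFt : M.Fib t) (hWt : M.W t) {g : E ⟶ N} (hg : M.Fib g)
    {a : P ⟶ A} {v : P ⟶ E} (hP : IsPullback a v j g) : M.W v := by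
  -- the auxiliary pullback F = E ×_A N along (g ≫ t, t)
  obtain ⟨F, f₁, f₂, hF⟩ : ∃ (F : C) (f₁ : F ⟶ E) (f₂ : F ⟶ N), IsPullback f₁ f₂ (g ≫ t) t :=
    ⟨_, _, _, IsPullback.of_hasPullback _ _⟩
  obtain ⟨hFf₁, hWf₁⟩ := trivFib_pullback M hF hFt hWt
  have hFf₂ : M.Fib f₂ := fib_pullback M hF.flip (M.fib_comp g t hg hFt)
  -- the two canonical sections of f₁
  have hκw : (𝟙 E) ≫ (g ≫ t) = (g ≫ t ≫ j) ≫ t := by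
    rw [Category.id_comp, Category.assoc, Category.assoc, hjt, Category.comp_id]
  have hιw : (𝟙 E) ≫ (g ≫ t) = g ≫ t := Category.id_comp _
  obtain ⟨κ, hκ₁, hκ₂⟩ : ∃ κ : E ⟶ F, κ ≫ f₁ = 𝟙 E ∧ κ ≫ f₂ = g ≫ t ≫ j :=
    ⟨hF.lift (𝟙 E) (g ≫ t ≫ j) hκw, hF.lift_fst _ _ _, hF.lift_snd _ _ _⟩
  obtain ⟨ι, hι₁, hι₂⟩ : ∃ ι : E ⟶ F, ι ≫ f₁ = 𝟙 E ∧ ι ≫ f₂ = g :=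
    ⟨hF.lift (𝟙 E) g hιw, hF.lift_fst _ _ _, hF.lift_snd _ _ _⟩
  have hWκ : M.W κ := M.w_cancel_right κ f₁ hWf₁ (by rw [hκ₁]; exact M.w_of_iso _ inferInstance)
  have hWι : M.W ι := M.w_cancel_right ι f₁ hWf₁ (by rw [hι₁]; exact M.w_of_iso _ inferInstance)
  -- E, with maps (g ≫ t, κ), is the pullback of j along f₂
  have key : ∀ s : PullbackCone j f₂, s.snd ≫ f₁ ≫ g ≫ t = s.fst := by
    intro s
    rw [hF.w, ← Category.assoc, ← s.condition, Category.assoc, hjt, Category.comp_id]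
  have claimA : IsPullback (g ≫ t) κ j f₂ := by
    have eq : (g ≫ t) ≫ j = κ ≫ f₂ := by rw [hκ₂]; simp only [Category.assoc]
    exact IsPullback.of_isLimit (PullbackCone.IsLimit.mk eq (fun s => s.snd ≫ f₁)
      (fun s => by simp only [Category.assoc]; exact key s)
      (fun s => by
        apply hF.hom_ext
        · rw [Category.assoc, hκ₁, Category.comp_id]
        · simp only [Category.assoc]
          rw [hκ₂, show s.snd ≫ f₁ ≫ g ≫ t ≫ j = (s.snd ≫ f₁ ≫ g ≫ t) ≫ j from by
              simp only [Category.assoc],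
            key s, s.condition])
      (fun s m hm₁ hm₂ => by rw [← hm₂, Category.assoc, hκ₁, Category.comp_id]))
  -- factor ι as a trivial cofibration followed by a (necessarily trivial) fibration
  obtain ⟨G, α, β, hCofα, hWα, hFibβ, hfacι⟩ := M.fact_trivCof_fib ι
  have hWβ : M.W β := M.w_cancel_left α β hWα (by rw [hfacι]; exact hWι)
  have hαh : α ≫ (β ≫ f₂) = g := by rw [← Category.assoc, hfacι, hι₂]
  have hFh : M.Fib (β ≫ f₂) := M.fib_comp β f₂ hFibβ hFf₂
  -- K, the pullback of j along β ≫ f₂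
  obtain ⟨K, aK, vG, hK⟩ :
      ∃ (K : C) (aK : K ⟶ A) (vG : K ⟶ G), IsPullback aK vG j (β ≫ f₂) :=
    ⟨_, _, _, IsPullback.of_hasPullback _ _⟩
  -- the comparison map ρ : K ⟶ E is a pullback of β along κ, hence a trivial fibration
  have hρw : aK ≫ j = (vG ≫ β) ≫ f₂ := by rw [Category.assoc]; exact hK.w
  obtain ⟨ρ, hρ₁, hρ₂⟩ : ∃ ρ : K ⟶ E, ρ ≫ (g ≫ t) = aK ∧ ρ ≫ κ = vG ≫ β :=
    ⟨claimA.lift aK (vG ≫ β) hρw, claimA.lift_fst _ _ _, claimA.lift_snd _ _ _⟩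
  have leftSq : IsPullback ρ vG κ β :=
    IsPullback.of_right (by rw [hρ₁]; exact hK) hρ₂ claimA
  obtain ⟨hFρ, hWρ⟩ := trivFib_pullback M leftSq hFibβ hWβ
  have hWvG : M.W vG :=
    M.w_cancel_right vG β hWβ (by rw [← leftSq.w]; exact M.w_comp ρ κ hWρ hWκ)
  -- a lift of α against g, used for the retract argument
  have sq : CommSq (𝟙 E) α g (β ≫ f₂) := ⟨by rw [Category.id_comp, hαh]⟩
  obtain ⟨⟨l⟩⟩ := (M.lift_trivCof_fib α g hCofα hWα hg).sq_hasLift sq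
  -- v is a retract of vG
  have hπw : a ≫ j = (v ≫ α) ≫ (β ≫ f₂) := by rw [Category.assoc, hαh]; exact hP.w
  obtain ⟨πK, hπ₁, hπ₂⟩ : ∃ πK : P ⟶ K, πK ≫ aK = a ∧ πK ≫ vG = v ≫ α :=
    ⟨hK.lift a (v ≫ α) hπw, hK.lift_fst _ _ _, hK.lift_snd _ _ _⟩
  have hΨw : aK ≫ j = (vG ≫ l.l) ≫ g := by rw [Category.assoc, l.fac_right]; exact hK.w
  obtain ⟨Ψ, hΨ₁, hΨ₂⟩ : ∃ Ψ : K ⟶ P, Ψ ≫ a = aK ∧ Ψ ≫ v = vG ≫ l.l :=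
    ⟨hP.lift aK (vG ≫ l.l) hΨw, hP.lift_fst _ _ _, hP.lift_snd _ _ _⟩
  have hretr : πK ≫ Ψ = 𝟙 P := by
    apply hP.hom_ext
    · rw [Category.assoc, hΨ₁, hπ₁, Category.id_comp]
    · rw [Category.assoc, hΨ₂, ← Category.assoc, hπ₂, Category.assoc, l.fac_left,
        Category.comp_id, Category.id_comp]
  exact M.w_retract v vG ⟨πK, Ψ, α, l.l, hretr, l.fac_left, hπ₂, hΨ₂⟩ hWvG

end Reedy

/-- (Reedy.) In any model category, the full subcategory of fibrant
objects is admissibly left exact and right proper: pullbacks of morphisms between fibrant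
objects along fibrations between fibrant objects exist in it, and the pullback of a weak
equivalence between fibrant objects along a fibration between fibrant objects is a weak
equivalence. -/
theorem statement13 [HasLimits C] (M : ModelStructure C) :
    AdmissiblyLeftExact M {X : C | M.Fibrant X} ∧
      RightProperOn M {X : C | M.Fibrant X} := by
  constructor
  · intro X X' Y f p hX hX' hY hp
    refine ⟨pullback f p, pullback.fst f p, pullback.snd f p, ?_, IsPullback.of_hasPullback f p⟩
    have h1 : M.Fib (pullback.fst f p) := fib_pullback M (IsPullback.of_hasPullback f p) hp
    show M.Fib (terminal.from _)
    rw [← terminal.comp_from (pullback.fst f p)]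
    exact M.fib_comp _ _ h1 hX'
  · intro X X' Y P w p fst snd hX hX' hY hPm hw hp hPb
    -- Brown factorization of w through X' ⨯ X
    have hprod : IsPullback (Limits.prod.fst : X' ⨯ X ⟶ X') Limits.prod.snd
        (terminal.from X') (terminal.from X) := IsPullback.of_hasBinaryProduct' X' X
    have hFibPr1 : M.Fib (Limits.prod.fst : X' ⨯ X ⟶ X') := fib_pullback M hprod hX
    have hFibPr2 : M.Fib (Limits.prod.snd : X' ⨯ X ⟶ X) := fib_pullback M hprod.flip hX'
    obtain ⟨Cv, i, π, hCofi, hWi, hFibπ, hfacπ⟩ := M.fact_trivCof_fib (prod.lift (𝟙 X') w)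
    obtain ⟨r, hr⟩ : ∃ r : Cv ⟶ X', r = π ≫ Limits.prod.fst := ⟨_, rfl⟩
    obtain ⟨q, hq⟩ : ∃ q : Cv ⟶ X, q = π ≫ Limits.prod.snd := ⟨_, rfl⟩
    have hir : i ≫ r = 𝟙 X' := by rw [hr, ← Category.assoc, hfacπ, prod.lift_fst]
    have hiq : i ≫ q = w := by rw [hq, ← Category.assoc, hfacπ, prod.lift_snd]
    have hFibr : M.Fib r := by rw [hr]; exact M.fib_comp _ _ hFibπ hFibPr1
    have hFibq : M.Fib q := by rw [hq]; exact M.fib_comp _ _ hFibπ hFibPr2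
    have hWr : M.W r := M.w_cancel_left i r hWi (by rw [hir]; exact M.w_of_iso _ inferInstance)
    have hWq : M.W q := M.w_cancel_left i q hWi (by rw [hiq]; exact hw)
    -- pull everything back along p
    obtain ⟨Q, c, qbar, hQ⟩ : ∃ (Q : C) (c : Q ⟶ Cv) (qbar : Q ⟶ Y), IsPullback c qbar q p :=
      ⟨_, _, _, IsPullback.of_hasPullback q p⟩
    have hFibc : M.Fib c := fib_pullback M hQ hp
    obtain ⟨hFibqbar, hWqbar⟩ := trivFib_pullback M hQ.flip hFibq hWq
    have hiw : (fst ≫ i) ≫ q = snd ≫ p := by rw [Category.assoc, hiq]; exact hPb.w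
    obtain ⟨ibar, hi₁, hi₂⟩ : ∃ ibar : P ⟶ Q, ibar ≫ c = fst ≫ i ∧ ibar ≫ qbar = snd :=
      ⟨hQ.lift (fst ≫ i) snd hiw, hQ.lift_fst _ _ _, hQ.lift_snd _ _ _⟩
    have houter : IsPullback (ibar ≫ qbar) fst p (i ≫ q) := by
      rw [hi₂, hiq]; exact hPb.flip
    have hleft : IsPullback fst ibar i c :=
      (IsPullback.of_right houter (by rw [hi₁]) hQ.flip).flip
    have hWibar : M.W ibar := w_pullback_section M i r hir hFibr hWr hFibc hleft
    have h2 : M.W (ibar ≫ qbar) := M.w_comp _ _ hWibar hWqbar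
    rwa [hi₂] at h2

end Paper
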